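/- For a smooth bounded domain Ω in ℍ^{n+1} with shifted principal curvatures κ̃ of ∂Ω, the modified quermassintegrals W̃_k(Ω) = ∑_{i=0}^k (−1)^{k−i} (k choose i) W_i(Ω) satisfy ∫_{∂Ω} E_k(κ̃) dμ = (n−k) W̃_{k+1}(Ω) + (n−2k) W̃_k(Ω) for k = 1,...,n−1. -/
import Mathlib


open scoped BigOperators

private lemma neg_one_pow_sub {m i : ℕ} (h : i ≤ m) :
    ((-1 : ℝ)) ^ (m - i) = (-1 : ℝ) ^ m * (-1 : ℝ) ^ i := by
  have hm : m - i + 2 * i = m + i := by omega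
  have h2 : ((-1 : ℝ)) ^ (m + i) = (-1 : ℝ) ^ (m - i) := by
    rw [← hm, pow_add, pow_mul]
    simp
  rw [← h2, pow_add]

private lemma real_choose (m i : ℕ) :
    ((i : ℝ) + 1) * (m.choose (i + 1) : ℝ) = ((m : ℝ) - (i : ℝ)) * (m.choose i : ℝ) := by
  rcases le_or_gt i m with h | h
  · have h1 := Nat.choose_succ_right_eq m i
    have h2 : ((m.choose (i + 1) : ℝ)) * ((i : ℝ) + 1)
        = (m.choose i : ℝ) * ((m : ℝ) - (i : ℝ)) := by
      have h3 := congrArg (fun t : ℕ => (t : ℝ)) h1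
      push_cast [Nat.cast_sub h] at h3
      linarith
    linarith
  · rw [Nat.choose_eq_zero_of_lt h, Nat.choose_eq_zero_of_lt (by omega)]
    push_cast
    ring

theorem modified_quermassintegral_relation (n : ℕ) (hn : 2 ≤ n)
    (W I : ℕ → ℝ)
    (hI0 : I 0 = (n : ℝ) * W 1)
    (hI : ∀ k, 1 ≤ k → k ≤ n - 1 →
      I k = ((n : ℝ) - (k : ℝ)) * W (k + 1) + (k : ℝ) * W (k - 1))
    (k : ℕ) (hk1 : 1 ≤ k) (hkn : k ≤ n - 1) :
    (∑ i ∈ Finset.range (k + 1), (-1 : ℝ) ^ (k - i) * (k.choose i : ℝ) * I i)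
      = ((n : ℝ) - (k : ℝ)) *
          (∑ i ∈ Finset.range (k + 2), (-1 : ℝ) ^ (k + 1 - i) * ((k + 1).choose i : ℝ) * W i)
        + ((n : ℝ) - 2 * (k : ℝ)) *
          (∑ i ∈ Finset.range (k + 1), (-1 : ℝ) ^ (k - i) * (k.choose i : ℝ) * W i) := by
  -- sign normalization
  have e1 : (∑ i ∈ Finset.range (k + 1), (-1 : ℝ) ^ (k - i) * (k.choose i : ℝ) * I i)
      = (-1 : ℝ) ^ k * ∑ i ∈ Finset.range (k + 1), (-1 : ℝ) ^ i * (k.choose i : ℝ) * I i := by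
    rw [Finset.mul_sum]
    refine Finset.sum_congr rfl fun i hi => ?_
    rw [neg_one_pow_sub (Nat.lt_succ_iff.mp (Finset.mem_range.mp hi))]; ring
  have e2 : (∑ i ∈ Finset.range (k + 1), (-1 : ℝ) ^ (k - i) * (k.choose i : ℝ) * W i)
      = (-1 : ℝ) ^ k * ∑ i ∈ Finset.range (k + 1), (-1 : ℝ) ^ i * (k.choose i : ℝ) * W i := by
    rw [Finset.mul_sum]
    refine Finset.sum_congr rfl fun i hi => ?_
    rw [neg_one_pow_sub (Nat.lt_succ_iff.mp (Finset.mem_range.mp hi))]; ring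
  have e3 : (∑ i ∈ Finset.range (k + 2), (-1 : ℝ) ^ (k + 1 - i) * ((k + 1).choose i : ℝ) * W i)
      = (-1 : ℝ) ^ (k + 1) *
          ∑ i ∈ Finset.range (k + 2), (-1 : ℝ) ^ i * ((k + 1).choose i : ℝ) * W i := by
    rw [Finset.mul_sum]
    refine Finset.sum_congr rfl fun i hi => ?_
    rw [neg_one_pow_sub (Nat.lt_succ_iff.mp (Finset.mem_range.mp hi))]; ring
  rw [e1, e2, e3]
  -- substitute I
  have e4 : (∑ i ∈ Finset.range (k + 1), (-1 : ℝ) ^ i * (k.choose i : ℝ) * I i)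
      = ∑ i ∈ Finset.range (k + 1), (-1 : ℝ) ^ i * (k.choose i : ℝ)
          * (((n : ℝ) - (i : ℝ)) * W (i + 1) + (i : ℝ) * W (i - 1)) := by
    refine Finset.sum_congr rfl fun i hi => ?_
    rcases Nat.eq_zero_or_pos i with h0 | h1
    · subst h0; simp [hI0]
    · have hin : i ≤ n - 1 := by
        have := Nat.lt_succ_iff.mp (Finset.mem_range.mp hi); omega
      rw [hI i h1 hin]
  rw [e4]
  -- split into two sums
  have e5 : (∑ i ∈ Finset.range (k + 1), (-1 : ℝ) ^ i * (k.choose i : ℝ)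
          * (((n : ℝ) - (i : ℝ)) * W (i + 1) + (i : ℝ) * W (i - 1)))
      = (∑ i ∈ Finset.range (k + 1),
            (-1 : ℝ) ^ i * (k.choose i : ℝ) * ((n : ℝ) - (i : ℝ)) * W (i + 1))
        + (∑ i ∈ Finset.range (k + 1),
            (-1 : ℝ) ^ i * (k.choose i : ℝ) * (i : ℝ) * W (i - 1)) := by
    rw [← Finset.sum_add_distrib]
    exact Finset.sum_congr rfl fun i _ => by ring
  rw [e5]
  -- coefficient functions over range (k+2)
  set g : ℕ → ℝ := fun j => match j with
    | 0 => 0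
    | (i + 1) => (-1 : ℝ) ^ i * (k.choose i : ℝ) * ((n : ℝ) - (i : ℝ)) * W (i + 1)
    with hg
  set b : ℕ → ℝ := fun j =>
    (-1 : ℝ) ^ (j + 1) * (k.choose (j + 1) : ℝ) * ((j : ℝ) + 1) * W j with hb
  have eA : (∑ i ∈ Finset.range (k + 1),
        (-1 : ℝ) ^ i * (k.choose i : ℝ) * ((n : ℝ) - (i : ℝ)) * W (i + 1))
      = ∑ j ∈ Finset.range (k + 2), g j := by
    rw [Finset.sum_range_succ' g]
    simp [hg]
  have eB : (∑ i ∈ Finset.range (k + 1),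
        (-1 : ℝ) ^ i * (k.choose i : ℝ) * (i : ℝ) * W (i - 1))
      = ∑ j ∈ Finset.range (k + 2), b j := by
    rw [Finset.sum_range_succ' (fun i => (-1 : ℝ) ^ i * (k.choose i : ℝ) * (i : ℝ) * W (i - 1))]
    rw [Finset.sum_range_succ b, Finset.sum_range_succ b]
    have hb1 : b k = 0 := by
      simp [hb, Nat.choose_eq_zero_of_lt (Nat.lt_succ_self k)]
    have hb2 : b (k + 1) = 0 := by
      simp [hb, Nat.choose_eq_zero_of_lt (by omega : k < k + 2)]
    rw [hb1, hb2]
    simp only [hb]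
    push_cast
    simp
  rw [eA, eB]
  -- extend the W-sum for k to range (k+2)
  have e6 : (∑ i ∈ Finset.range (k + 1), (-1 : ℝ) ^ i * (k.choose i : ℝ) * W i)
      = ∑ i ∈ Finset.range (k + 2), (-1 : ℝ) ^ i * (k.choose i : ℝ) * W i := by
    rw [Finset.sum_range_succ (fun i => (-1 : ℝ) ^ i * (k.choose i : ℝ) * W i) (k + 1)]
    simp [Nat.choose_eq_zero_of_lt (Nat.lt_succ_self k)]
  rw [e6]
  -- combine everything into a single sum and compare coefficients
  rw [← Finset.sum_add_distrib, Finset.mul_sum, Finset.mul_sum, Finset.mul_sum,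
    Finset.mul_sum, Finset.mul_sum, ← Finset.sum_add_distrib]
  refine Finset.sum_congr rfl fun j _ => ?_
  match j with
  | 0 =>
    simp only [hg, hb]
    simp [Nat.choose_one_right, pow_succ]
    ring
  | (i + 1) =>
    simp only [hg, hb]
    have h1 := real_choose k i
    have h2 := real_choose k (i + 1)
    have h3 : ((k + 1).choose (i + 1) : ℝ) = (k.choose i : ℝ) + (k.choose (i + 1) : ℝ) := by
      rw [Nat.choose_succ_succ]
      push_cast
      ring
    push_cast at h1 h2 h3 ⊢
    linear_combination ((-1 : ℝ) ^ k * (-1 : ℝ) ^ i * W (i + 1)) *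
      (-h1 + h2 - ((n : ℝ) - (k : ℝ)) * h3)
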